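/- arXiv:1910.09633 — 2 statements merged into one kernel-verified Lean document; each statement's English description precedes it below -/
import Mathlib

section
/- With the setup of the previous statement, the sequence n ↦ Σ_{r ∈ TerSeq≤n(C)} tr(End(r)) is monotonically increasing in n and bounded above by tr(C), where TerSeq≤n(C) is the set of reduction sequences from C of length ≤ n ending in a terminal state and End(r) is the endpoint of r. Hence Halt(C) := (⨆ₙ Σ_{r ∈ TerSeq≤n(C)} tr(End(r)))/tr(C) is well defined and lies in [0,1] for tr(C) > 0. -/
open scoped ENNReal NNReal

/-- Reduction sequences of `k` steps starting at `C` that end in a terminal state. -/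
def TermPaths {State : Type*} (step : State → State → Prop) (C : State) (k : ℕ) :
    Set (Fin (k + 1) → State) :=
  {p | p 0 = C ∧ (∀ i : Fin k, step (p i.castSucc) (p i.succ)) ∧
    ¬∃ d, step (p (Fin.last k)) d}

/-- Total trace of the endpoints of terminating reduction sequences of length `≤ n`. -/
noncomputable def termWeight {State : Type*} (step : State → State → Prop)
    (tr : State → ℝ≥0) (C : State) (n : ℕ) : ℝ≥0∞ :=
  ∑ k ∈ Finset.range (n + 1), ∑' p : TermPaths step C k, (tr (p.1 (Fin.last k)) : ℝ≥0∞)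

section Aux

variable {State : Type*} {step : State → State → Prop}

lemma termPaths_zero_term {C : State} (h : ¬∃ d, step C d) :
    TermPaths step C 0 = {fun _ => C} := by
  ext p
  constructor
  · rintro ⟨h0, -, -⟩
    funext i
    have hi : i = 0 := Fin.ext (Nat.lt_one_iff.mp i.isLt)
    simp [hi, h0]
  · rintro rfl
    exact ⟨rfl, fun i => i.elim0, by simpa using h⟩

lemma termPaths_zero_nonterm {C : State} (h : ∃ d, step C d) :
    TermPaths step C 0 = ∅ := by
  ext p
  simp only [Set.mem_empty_iff_false, iff_false]
  rintro ⟨h0, -, ht⟩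
  exact ht (by simpa [Fin.last, h0] using h)

lemma termPaths_succ_term {C : State} {k : ℕ} (h : ¬∃ d, step C d) :
    TermPaths step C (k + 1) = ∅ := by
  ext p
  simp only [Set.mem_empty_iff_false, iff_false]
  rintro ⟨h0, hs, -⟩
  have := hs 0
  exact h ⟨p (Fin.succ 0), by simpa [h0] using this⟩

def consMap (C : State) (k : ℕ) :
    ((d : {d // step C d}) × TermPaths step d.1 k) → TermPaths step C (k + 1) :=
  fun x => ⟨Fin.cons C x.2.1, by
    obtain ⟨⟨d, hd⟩, q, h0, hs, ht⟩ := x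
    refine ⟨rfl, ?_, ?_⟩
    · intro i
      induction i using Fin.cases with
      | zero => simpa [h0] using hd
      | succ j =>
        have := hs j
        simpa [← Fin.succ_castSucc] using this
    · simpa [← Fin.succ_last] using ht⟩

lemma consMap_bijective (C : State) (k : ℕ) :
    Function.Bijective (consMap (step := step) C k) := by
  constructor
  · rintro ⟨⟨d, hd⟩, q, hq⟩ ⟨⟨d', hd'⟩, q', hq'⟩ h
    have hfun : (Fin.cons C q : Fin (k + 2) → State) = Fin.cons C q' :=
      congrArg Subtype.val h
    have hq2 : q = q' := by
      funext i
      have := congrFun hfun i.succ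
      simpa using this
    subst hq2
    have hdd : d = d' := hq.1.symm.trans hq'.1
    subst hdd
    rfl
  · rintro ⟨p, h0, hs, ht⟩
    have hstep : step C (p 1) := by
      have := hs 0
      simpa [h0] using this
    refine ⟨⟨⟨p 1, hstep⟩, ⟨Fin.tail p, by simp [Fin.tail], ?_, ?_⟩⟩, ?_⟩
    · intro i
      have := hs i.succ
      simpa [Fin.tail, ← Fin.succ_castSucc] using this
    · simpa [Fin.tail, ← Fin.succ_last] using ht
    · apply Subtype.ext
      show Fin.cons C (Fin.tail p) = p
      rw [← h0]
      exact Fin.cons_self_tail p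

lemma tsum_termPaths_succ (tr : State → ℝ≥0) (C : State) (k : ℕ) :
    (∑' p : TermPaths step C (k + 1), (tr (p.1 (Fin.last (k + 1))) : ℝ≥0∞))
      = ∑' d : {d // step C d}, ∑' q : TermPaths step d.1 k,
          (tr (q.1 (Fin.last k)) : ℝ≥0∞) := by
  rw [← (Equiv.ofBijective _ (consMap_bijective (step := step) C k)).tsum_eq,
    ENNReal.tsum_sigma']
  apply tsum_congr
  intro d
  apply tsum_congr
  intro q
  have h1 : ((Equiv.ofBijective _ (consMap_bijective (step := step) C k)) ⟨d, q⟩).1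
      (Fin.last (k + 1)) = q.1 (Fin.last k) := by
    show (Fin.cons C q.1 : Fin (k + 1 + 1) → State) (Fin.last (k + 1)) = q.1 (Fin.last k)
    rw [← Fin.succ_last, Fin.cons_succ]
  rw [h1]

lemma tsum_termPaths_zero_term (tr : State → ℝ≥0) {C : State} (h : ¬∃ d, step C d) :
    (∑' p : TermPaths step C 0, (tr (p.1 (Fin.last 0)) : ℝ≥0∞)) = (tr C : ℝ≥0∞) := by
  rw [termPaths_zero_term h]
  exact tsum_singleton (fun _ => C) (fun g => (tr (g (Fin.last 0)) : ℝ≥0∞))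

lemma termWeight_le (tr : State → ℝ≥0)
    (hsum : ∀ s, (∃ d, step s d) →
      (tr s : ℝ≥0∞) = ∑' d : {d // step s d}, (tr d.1 : ℝ≥0∞)) :
    ∀ n (C : State), termWeight step tr C n ≤ (tr C : ℝ≥0∞) := by
  intro n
  induction n with
  | zero =>
    intro C
    rw [termWeight, Finset.sum_range_one]
    by_cases h : ∃ d, step C d
    · rw [termPaths_zero_nonterm h, tsum_empty]
      exact zero_le
    · exact le_of_eq (tsum_termPaths_zero_term tr h)
  | succ n ih =>
    intro C
    by_cases h : ∃ d, step C d
    · have hW : termWeight step tr C (n + 1)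
          = ∑ k ∈ Finset.range (n + 1), ∑' p : TermPaths step C (k + 1),
              (tr (p.1 (Fin.last (k + 1))) : ℝ≥0∞) := by
        rw [termWeight, Finset.sum_range_succ', termPaths_zero_nonterm h,
          tsum_empty, add_zero]
      rw [hW]
      calc ∑ k ∈ Finset.range (n + 1), ∑' p : TermPaths step C (k + 1),
              (tr (p.1 (Fin.last (k + 1))) : ℝ≥0∞)
          = ∑ k ∈ Finset.range (n + 1), ∑' d : {d // step C d},
              ∑' q : TermPaths step d.1 k, (tr (q.1 (Fin.last k)) : ℝ≥0∞) := by
            exact Finset.sum_congr rfl fun k _ => tsum_termPaths_succ tr C k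
        _ = ∑' d : {d // step C d}, ∑ k ∈ Finset.range (n + 1),
              ∑' q : TermPaths step d.1 k, (tr (q.1 (Fin.last k)) : ℝ≥0∞) := by
            exact (Summable.tsum_finsetSum fun i _ => ENNReal.summable).symm
        _ = ∑' d : {d // step C d}, termWeight step tr d.1 n := rfl
        _ ≤ ∑' d : {d // step C d}, (tr d.1 : ℝ≥0∞) :=
            ENNReal.tsum_le_tsum fun d => ih d.1
        _ = (tr C : ℝ≥0∞) := (hsum C h).symm
    · have hW : termWeight step tr C (n + 1) = (tr C : ℝ≥0∞) := by
        rw [termWeight, Finset.sum_range_succ']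
        have h1 : ∀ k, (∑' p : TermPaths step C (k + 1),
            (tr (p.1 (Fin.last (k + 1))) : ℝ≥0∞)) = 0 := by
          intro k
          rw [termPaths_succ_term h]
          simp
        simp only [h1, Finset.sum_const_zero, zero_add]
        exact tsum_termPaths_zero_term tr h
      rw [hW]

end Aux

theorem stmt_14 {State : Type*} (step : State → State → Prop) (tr : State → ℝ≥0)
    (hfin : ∀ s, {d | step s d}.Finite)
    (hcard : ∀ s, Set.ncard {d | step s d} ≤ 2)
    (hsum : ∀ s, (∃ d, step s d) →
      (tr s : ℝ≥0∞) = ∑' d : {d // step s d}, (tr d.1 : ℝ≥0∞))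
    (C : State) :
    Monotone (termWeight step tr C) ∧
    (∀ n, termWeight step tr C n ≤ (tr C : ℝ≥0∞)) ∧
    (0 < tr C → (⨆ n, termWeight step tr C n) / (tr C : ℝ≥0∞) ≤ 1) := by
  have hle := termWeight_le (step := step) tr hsum
  refine ⟨?_, fun n => hle n C, ?_⟩
  · intro a b hab
    unfold termWeight
    exact Finset.sum_le_sum_of_subset
      (Finset.range_subset_range.mpr (Nat.add_le_add_right hab 1))
  · intro hC
    have hsup : (⨆ n, termWeight step tr C n) ≤ (tr C : ℝ≥0∞) :=
      iSup_le fun n => hle n C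
    calc (⨆ n, termWeight step tr C n) / (tr C : ℝ≥0∞)
        ≤ (tr C : ℝ≥0∞) / (tr C : ℝ≥0∞) := ENNReal.div_le_div_right hsup _
      _ = 1 := ENNReal.div_self (by exact_mod_cast hC.ne') ENNReal.coe_ne_top
end

section
/- With the setup above, Halt satisfies the recurrence: Halt(T) = 1 for any terminal possible state T, and for any non-terminal possible state C, Halt(C) = Σ_{C ⤳ D, tr(D) > 0} (tr(D)/tr(C)) · Halt(D). -/
open scoped ENNReal NNReal

/-- The probability of termination of a state. -/
noncomputable def Halt {State : Type*} (step : State → State → Prop)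
    (tr : State → ℝ≥0) (C : State) : ℝ≥0∞ :=
  (⨆ n, termWeight step tr C n) / (tr C : ℝ≥0∞)

section Aux

variable {State : Type*} (step : State → State → Prop) (tr : State → ℝ≥0)

lemma tr_step_le
    (hsum : ∀ s, (∃ d, step s d) →
      (tr s : ℝ≥0∞) = ∑' d : {d // step s d}, (tr d.1 : ℝ≥0∞))
    {s d : State} (h : step s d) : (tr d : ℝ≥0∞) ≤ (tr s : ℝ≥0∞) := by
  rw [hsum s ⟨d, h⟩]
  exact ENNReal.le_tsum (⟨d, h⟩ : {d // step s d})

lemma endpoint_zero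
    (hsum : ∀ s, (∃ d, step s d) →
      (tr s : ℝ≥0∞) = ∑' d : {d // step s d}, (tr d.1 : ℝ≥0∞))
    {C : State} (hC : tr C = 0) {k : ℕ}
    {p : Fin (k + 1) → State} (hp : p ∈ TermPaths step C k) :
    tr (p (Fin.last k)) = 0 := by
  have key : ∀ i : Fin (k + 1), tr (p i) = 0 := by
    intro i
    induction i using Fin.induction with
    | zero => rw [hp.1]; exact hC
    | succ j ih =>
      have hle := tr_step_le step tr hsum (hp.2.1 j)
      rw [ih, ENNReal.coe_zero, nonpos_iff_eq_zero, ENNReal.coe_eq_zero] at hle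
      exact hle
  exact key _

/-- Decomposition of terminating paths of length `k+1` into a first step and a path. -/
noncomputable def pathEquiv (C : State) (k : ℕ) :
    TermPaths step C (k + 1) ≃ Σ d : {d // step C d}, TermPaths step d.1 k where
  toFun p :=
    ⟨⟨p.1 1, by
        have h0 := p.2.2.1 0
        rwa [Fin.castSucc_zero, Fin.succ_zero_eq_one, p.2.1] at h0⟩,
      ⟨fun i => p.1 i.succ, by
        refine ⟨?_, fun i => ?_, ?_⟩
        · show p.1 (Fin.succ 0) = p.1 1
          rw [Fin.succ_zero_eq_one]
        · have hs := p.2.2.1 i.succ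
          rwa [← Fin.succ_castSucc] at hs
        · show ¬∃ d, step (p.1 (Fin.last k).succ) d
          rw [Fin.succ_last]
          exact p.2.2.2⟩⟩
  invFun := fun ⟨⟨d, hd⟩, ⟨q, hq⟩⟩ =>
    ⟨Fin.cons C q, by
      refine ⟨Fin.cons_zero _ _, fun i => ?_, ?_⟩
      · induction i using Fin.cases with
        | zero =>
          rw [Fin.castSucc_zero, Fin.cons_zero, Fin.cons_succ, hq.1]
          exact hd
        | succ j =>
          rw [← Fin.succ_castSucc, Fin.cons_succ, Fin.cons_succ]
          exact hq.2.1 j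
      · have hlast : (Fin.cons C q : Fin (k + 2) → State) (Fin.last (k + 1)) = q (Fin.last k) := by
          rw [← Fin.succ_last]; exact Fin.cons_succ _ _ _
        show ¬∃ e, step ((Fin.cons C q : Fin (k + 2) → State) (Fin.last (k + 1))) e
        rw [hlast]
        exact hq.2.2⟩
  left_inv p := by
    obtain ⟨p, hp⟩ := p
    apply Subtype.ext
    show Fin.cons C (fun i : Fin (k + 1) => p i.succ) = p
    funext i
    induction i using Fin.cases with
    | zero => rw [Fin.cons_zero, hp.1]
    | succ j => rw [Fin.cons_succ]
  right_inv x := by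
    obtain ⟨⟨d, hd⟩, ⟨q, hq⟩⟩ := x
    apply Sigma.subtype_ext
    · apply Subtype.ext
      show (Fin.cons C q : Fin (k + 2) → State) 1 = d
      rw [← Fin.succ_zero_eq_one, Fin.cons_succ]
      exact hq.1
    · show (fun i : Fin (k + 1) => (Fin.cons C q : Fin (k + 2) → State) i.succ) = q
      funext i
      exact Fin.cons_succ _ _ _

lemma S_succ (C : State) (k : ℕ) :
    ∑' p : TermPaths step C (k + 1), (tr (p.1 (Fin.last (k + 1))) : ℝ≥0∞)
      = ∑' d : {d // step C d},
          ∑' q : TermPaths step d.1 k, (tr (q.1 (Fin.last k)) : ℝ≥0∞) := by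
  rw [← ENNReal.tsum_sigma'
    (f := fun x : Σ d : {d // step C d}, TermPaths step d.1 k =>
      (tr (x.2.1 (Fin.last k)) : ℝ≥0∞))]
  rw [← Equiv.tsum_eq (pathEquiv step C k)
    (fun x : Σ d : {d // step C d}, TermPaths step d.1 k =>
      (tr (x.2.1 (Fin.last k)) : ℝ≥0∞))]
  refine tsum_congr fun p => ?_
  show (tr (p.1 (Fin.last (k + 1))) : ℝ≥0∞) = (tr (p.1 (Fin.last k).succ) : ℝ≥0∞)
  rw [Fin.succ_last]

lemma isEmpty_paths_zero (C : State) (hC : ∃ d, step C d) :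
    IsEmpty (TermPaths step C 0) := by
  constructor
  rintro ⟨p, h0, -, hterm⟩
  apply hterm
  have : p (Fin.last 0) = C := by
    rw [show Fin.last 0 = 0 from rfl, h0]
  rw [this]
  exact hC

lemma termWeight_succ (C : State) (hC : ∃ d, step C d) (n : ℕ) :
    termWeight step tr C (n + 1) = ∑' d : {d // step C d}, termWeight step tr d.1 n := by
  have := isEmpty_paths_zero step C hC
  unfold termWeight
  rw [Finset.sum_range_succ', tsum_empty, add_zero]
  rw [Finset.sum_congr rfl fun k _ => S_succ step tr C k]
  exact (Summable.tsum_finsetSum fun _ _ => ENNReal.summable).symm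

lemma termWeight_mono (C : State) : Monotone (termWeight step tr C) := by
  intro m n h
  exact Finset.sum_le_sum_of_subset (Finset.range_subset_range.2 (by omega))

lemma sup_termWeight_zero
    (hsum : ∀ s, (∃ d, step s d) →
      (tr s : ℝ≥0∞) = ∑' d : {d // step s d}, (tr d.1 : ℝ≥0∞))
    (C : State) (hC : tr C = 0) :
    (⨆ n, termWeight step tr C n) = 0 := by
  rw [← nonpos_iff_eq_zero]
  refine iSup_le fun n => ?_
  rw [nonpos_iff_eq_zero]
  unfold termWeight
  refine Finset.sum_eq_zero fun k _ => ?_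
  rw [ENNReal.tsum_eq_zero]
  rintro ⟨p, hp⟩
  rw [ENNReal.coe_eq_zero]
  exact endpoint_zero step tr hsum hC hp

lemma termWeight_terminal (T : State) (hT : ¬∃ d, step T d) (n : ℕ) :
    termWeight step tr T n = (tr T : ℝ≥0∞) := by
  have h0 : TermPaths step T 0 = {fun _ => T} := by
    ext p
    constructor
    · rintro ⟨h1, -, -⟩
      show p = fun _ => T
      funext i
      rw [Fin.fin_one_eq_zero i, h1]
    · rintro rfl
      exact ⟨rfl, fun i => i.elim0, hT⟩
  unfold termWeight
  rw [Finset.sum_eq_single_of_mem 0 (Finset.mem_range.2 (Nat.succ_pos n))]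
  · rw [h0]
    exact tsum_singleton (fun _ => T) (fun p => (tr (p (Fin.last 0)) : ℝ≥0∞))
  · intro k _ hk
    obtain ⟨m, rfl⟩ := Nat.exists_eq_succ_of_ne_zero hk
    have : IsEmpty (TermPaths step T (m + 1)) := by
      constructor
      rintro ⟨p, h1, hs, -⟩
      apply hT
      have := hs 0
      rw [Fin.castSucc_zero, h1] at this
      exact ⟨_, this⟩
    exact tsum_empty

end Aux

theorem stmt_15 {State : Type*} (step : State → State → Prop) (tr : State → ℝ≥0)
    (hfin : ∀ s, {d | step s d}.Finite)
    (hcard : ∀ s, Set.ncard {d | step s d} ≤ 2)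
    (hsum : ∀ s, (∃ d, step s d) →
      (tr s : ℝ≥0∞) = ∑' d : {d // step s d}, (tr d.1 : ℝ≥0∞)) :
    (∀ T : State, (¬∃ d, step T d) → 0 < tr T → Halt step tr T = 1) ∧
    (∀ C : State, (∃ d, step C d) → 0 < tr C →
      Halt step tr C =
        ∑' d : {d // step C d ∧ 0 < tr d},
          ((tr d.1 : ℝ≥0∞) / (tr C : ℝ≥0∞)) * Halt step tr d.1) := by
  constructor
  · intro T hT htr
    unfold Halt
    rw [iSup_congr (termWeight_terminal step tr T hT), iSup_const,
      ENNReal.div_self (by exact_mod_cast htr.ne') ENNReal.coe_ne_top]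
  · intro C hC htr
    have htrC0 : (tr C : ℝ≥0∞) ≠ 0 := by exact_mod_cast htr.ne'
    -- the supremum commutes with the finite sum over successors
    haveI : Fintype {d // step C d} := (hfin C).fintype
    have hsup : (⨆ n, termWeight step tr C n)
        = ∑' d : {d // step C d}, ⨆ n, termWeight step tr d.1 n := by
      have h1 : (⨆ n, termWeight step tr C n) = ⨆ n, termWeight step tr C (n + 1) := by
        refine le_antisymm (iSup_le fun n => ?_) (iSup_le fun n => le_iSup (termWeight step tr C) (n + 1))
        exact termWeight_mono step tr C (Nat.le_succ n) |>.trans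
          (le_iSup (fun m => termWeight step tr C (m + 1)) n)
      rw [h1]
      calc ⨆ n, termWeight step tr C (n + 1)
          = ⨆ n, ∑ d : {d // step C d}, termWeight step tr d.1 n := by
            refine iSup_congr fun n => ?_
            rw [termWeight_succ step tr C hC n, tsum_fintype]
        _ = ∑ d : {d // step C d}, ⨆ n, termWeight step tr d.1 n :=
            (ENNReal.finsetSum_iSup_of_monotone fun d : {d // step C d} => termWeight_mono step tr d.1).symm
        _ = ∑' d : {d // step C d}, ⨆ n, termWeight step tr d.1 n := (tsum_fintype _).symm
    have hHalt : Halt step tr C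
        = ∑' d : {d // step C d},
            ((tr d.1 : ℝ≥0∞) / (tr C : ℝ≥0∞)) * Halt step tr d.1 := by
      unfold Halt
      rw [hsup, ENNReal.div_eq_inv_mul, ← ENNReal.tsum_mul_left]
      refine tsum_congr fun d => ?_
      rw [← ENNReal.div_eq_inv_mul]
      by_cases hd0 : tr d.1 = 0
      · simp [sup_termWeight_zero step tr hsum d.1 hd0, hd0]
      · have hd0' : (tr d.1 : ℝ≥0∞) ≠ 0 := by exact_mod_cast hd0
        rw [div_eq_mul_inv, div_eq_mul_inv, div_eq_mul_inv]
        calc (⨆ n, termWeight step tr d.1 n) * (tr C : ℝ≥0∞)⁻¹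
            = ((tr d.1 : ℝ≥0∞) * (tr d.1 : ℝ≥0∞)⁻¹)
                * ((⨆ n, termWeight step tr d.1 n) * (tr C : ℝ≥0∞)⁻¹) := by
              rw [ENNReal.mul_inv_cancel hd0' ENNReal.coe_ne_top, one_mul]
          _ = (tr d.1 : ℝ≥0∞) * (tr C : ℝ≥0∞)⁻¹
                * ((⨆ n, termWeight step tr d.1 n) * (tr d.1 : ℝ≥0∞)⁻¹) := by ring
    rw [hHalt]
    classical
    set g : State → ℝ≥0∞ :=
      fun d => if step C d ∧ 0 < tr d
        then ((tr d : ℝ≥0∞) / (tr C : ℝ≥0∞)) * Halt step tr d else 0 with hg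
    have hsupp : Function.support g ⊆ {d | step C d ∧ 0 < tr d} := by
      intro d hd
      by_contra h
      exact hd (by simp only [hg]; exact if_neg h)
    have hsupp' : Function.support g ⊆ {d | step C d} := fun d hd => (hsupp hd).1
    have e1 : ∑' d : {d // step C d}, g d.1 = ∑' d, g d :=
      tsum_subtype_eq_of_support_subset hsupp'
    have e2 : ∑' d : {d // step C d ∧ 0 < tr d}, g d.1 = ∑' d, g d :=
      tsum_subtype_eq_of_support_subset hsupp
    have c1 : ∑' d : {d // step C d},
        ((tr d.1 : ℝ≥0∞) / (tr C : ℝ≥0∞)) * Halt step tr d.1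
        = ∑' d : {d // step C d}, g d.1 := by
      refine tsum_congr fun d => ?_
      by_cases hd : 0 < tr d.1
      · simp [hg, d.2, hd]
      · have h0 : tr d.1 = 0 := le_antisymm (not_lt.mp hd) zero_le
        simp [hg, hd, h0]
    have c2 : ∑' d : {d // step C d ∧ 0 < tr d},
        ((tr d.1 : ℝ≥0∞) / (tr C : ℝ≥0∞)) * Halt step tr d.1
        = ∑' d : {d // step C d ∧ 0 < tr d}, g d.1 :=
      tsum_congr fun d => by simp [hg, d.2.1, d.2.2]
    exact c1.trans (e1.trans (e2.symm.trans c2.symm))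
end
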